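/- Let c ≥ 0, μ ∈ ℝ, s > 0, and set Δ = 1 + 2cs². Let q(x) = exp(−c·(max(x,0))²)·φ(x; μ, s²) and Z = ∫ℝ q(x) dx, and define p₁ = [Φ(0; μ, s²)·φ(0; μ/Δ, s²/Δ)] / [Φ(0; μ, s²)·φ(0; μ/Δ, s²/Δ) + φ(0; μ, s²)·(1 − Φ(0; μ/Δ, s²/Δ))]. Then for every x ∈ ℝ, q(x)/Z = (1 − p₁) · [φ(x; μ/Δ, s²/Δ)/(1 − Φ(0; μ/Δ, s²/Δ))]·1{x > 0} + p₁ · [φ(x; μ, s²)/Φ(0; μ, s²)]·1{x ≤ 0}; that is, the normalized density q/Z is a two-component mixture, with weight p₁, of the normal N(μ, s²) truncated to (−∞, 0] and the normal N(μ/Δ, s²/Δ) truncated to (0, ∞). -/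

import Mathlib

open MeasureTheory Real

/-- The density of the normal distribution with mean `μ` and variance `s2`:
`φ(x; μ, s²) = (2πs²)^(−1/2)·exp(−(x−μ)²/(2s²))`. -/
noncomputable def normalPDF (μ s2 x : ℝ) : ℝ :=
  (2 * Real.pi * s2) ^ (-(1:ℝ)/2) * Real.exp (-(x - μ) ^ 2 / (2 * s2))

/-- The cumulative distribution function of the normal distribution with mean `μ`
and variance `s2`: `Φ(x; μ, s²) = ∫_{−∞}^x φ(t; μ, s²) dt`. -/
noncomputable def normalCDF (μ s2 x : ℝ) : ℝ :=
  ∫ t in Set.Iic x, normalPDF μ s2 t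


lemma normalPDF_pos (μ s2 x : ℝ) (h : 0 < s2) : 0 < normalPDF μ s2 x := by
  unfold normalPDF
  positivity

lemma normalPDF_eq_gaussian (μ s2 : ℝ) (h : 0 < s2) :
    normalPDF μ s2 = ProbabilityTheory.gaussianPDFReal μ ⟨s2, h.le⟩ := by
  funext x
  simp only [normalPDF, ProbabilityTheory.gaussianPDFReal, NNReal.coe_mk]
  rw [show (-(1:ℝ)/2) = -(1/2 : ℝ) by ring, Real.rpow_neg (by positivity), ← Real.sqrt_eq_rpow]
  rfl

lemma normalPDF_integrable (μ s2 : ℝ) (h : 0 < s2) : Integrable (normalPDF μ s2) := by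
  rw [normalPDF_eq_gaussian μ s2 h]
  exact ProbabilityTheory.integrable_gaussianPDFReal _ _

lemma normalPDF_integral (μ s2 : ℝ) (h : 0 < s2) : ∫ x, normalPDF μ s2 x = 1 := by
  rw [normalPDF_eq_gaussian μ s2 h]
  exact ProbabilityTheory.integral_gaussianPDFReal_eq_one μ
    (fun h0 => h.ne' (congrArg Subtype.val h0))

lemma setIntegral_normalPDF_pos (μ s2 : ℝ) (h : 0 < s2) {S : Set ℝ} (hS : MeasurableSet S)
    (hvol : 0 < volume S) : 0 < ∫ x in S, normalPDF μ s2 x := by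
  rw [setIntegral_pos_iff_support_of_nonneg_ae
    (ae_of_all _ fun x => (normalPDF_pos μ s2 x h).le)
    ((normalPDF_integrable μ s2 h).integrableOn)]
  have hsupp : Function.support (normalPDF μ s2) = Set.univ := by
    ext x; simp [Function.mem_support, (normalPDF_pos μ s2 x h).ne']
  rw [hsupp, Set.univ_inter]
  exact hvol

lemma exp_aux (p1 p2 a b c d e : ℝ) (h : a + b + c = d + e) :
    Real.exp a * (p1 * Real.exp b) * (p2 * Real.exp c) = p1 * Real.exp d * (p2 * Real.exp e) := by
  have h2 := congrArg Real.exp h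
  rw [Real.exp_add, Real.exp_add, Real.exp_add] at h2
  linear_combination p1 * p2 * h2

/-- With `c ≥ 0`, `s > 0`, `Δ = 1 + 2cs²`, `q(x) = exp(−c·(max(x,0))²)·φ(x; μ, s²)`,
`Z = ∫ q`, and
`p₁ = Φ(0;μ,s²)·φ(0;μ/Δ,s²/Δ) / [Φ(0;μ,s²)·φ(0;μ/Δ,s²/Δ) + φ(0;μ,s²)·(1−Φ(0;μ/Δ,s²/Δ))]`,
the normalized density `q/Z` is the mixture
`(1−p₁)·[φ(x;μ/Δ,s²/Δ)/(1−Φ(0;μ/Δ,s²/Δ))]·1{x>0} + p₁·[φ(x;μ,s²)/Φ(0;μ,s²)]·1{x≤0}`. -/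
theorem stmt17 (c μ s : ℝ) (hc : 0 ≤ c) (hs : 0 < s)
    (Δ Z p₁ : ℝ) (q : ℝ → ℝ)
    (hΔ : Δ = 1 + 2 * c * s ^ 2)
    (hq : q = fun x => Real.exp (-c * (max x 0) ^ 2) * normalPDF μ (s ^ 2) x)
    (hZ : Z = ∫ x, q x)
    (hp₁ : p₁ = normalCDF μ (s ^ 2) 0 * normalPDF (μ / Δ) (s ^ 2 / Δ) 0 /
        (normalCDF μ (s ^ 2) 0 * normalPDF (μ / Δ) (s ^ 2 / Δ) 0 +
          normalPDF μ (s ^ 2) 0 * (1 - normalCDF (μ / Δ) (s ^ 2 / Δ) 0))) :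
    ∀ x : ℝ, q x / Z =
      (1 - p₁) * (normalPDF (μ / Δ) (s ^ 2 / Δ) x / (1 - normalCDF (μ / Δ) (s ^ 2 / Δ) 0)) *
          (if 0 < x then 1 else 0) +
        p₁ * (normalPDF μ (s ^ 2) x / normalCDF μ (s ^ 2) 0) * (if x ≤ 0 then 1 else 0) := by
  have hs2 : (0:ℝ) < s ^ 2 := by positivity
  have hΔpos : 0 < Δ := by rw [hΔ]; positivity
  have hs2Δ : (0:ℝ) < s ^ 2 / Δ := by positivity
  set A := normalCDF μ (s ^ 2) 0 with hA_def
  set B := normalPDF (μ / Δ) (s ^ 2 / Δ) 0 with hB_def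
  set C := normalPDF μ (s ^ 2) 0 with hC_def
  -- positivity facts
  have hA : 0 < A := setIntegral_normalPDF_pos μ _ hs2 measurableSet_Iic (by simp [Real.volume_Iic])
  have hB : 0 < B := normalPDF_pos _ _ _ hs2Δ
  have hC : 0 < C := normalPDF_pos _ _ _ hs2
  have hDint : 0 < ∫ x in Set.Ioi (0:ℝ), normalPDF (μ / Δ) (s ^ 2 / Δ) x :=
    setIntegral_normalPDF_pos _ _ hs2Δ measurableSet_Ioi (by simp [Real.volume_Ioi])
  have hsplit : (∫ x in Set.Iic (0:ℝ), normalPDF (μ / Δ) (s ^ 2 / Δ) x)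
      + ∫ x in Set.Ioi (0:ℝ), normalPDF (μ / Δ) (s ^ 2 / Δ) x = 1 := by
    rw [intervalIntegral.integral_Iic_add_Ioi ((normalPDF_integrable _ _ hs2Δ).integrableOn)
      ((normalPDF_integrable _ _ hs2Δ).integrableOn)]
    exact normalPDF_integral _ _ hs2Δ
  have hDeq : 1 - normalCDF (μ / Δ) (s ^ 2 / Δ) 0
      = ∫ x in Set.Ioi (0:ℝ), normalPDF (μ / Δ) (s ^ 2 / Δ) x := by
    rw [normalCDF]; linarith
  set D := 1 - normalCDF (μ / Δ) (s ^ 2 / Δ) 0 with hD_def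
  have hD : 0 < D := hDeq ▸ hDint
  -- key pointwise identity
  have hkey : ∀ y : ℝ, Real.exp (-c * y ^ 2) * normalPDF μ (s ^ 2) y * B
      = C * normalPDF (μ / Δ) (s ^ 2 / Δ) y := by
    intro y
    rw [hB_def, hC_def]
    simp only [normalPDF]
    rw [show ((2:ℝ) * π * (s ^ 2)) ^ (-(1:ℝ)/2) * Real.exp (-(0 - μ) ^ 2 / (2 * s ^ 2)) *
        ((2 * π * (s ^ 2 / Δ)) ^ (-(1:ℝ)/2) * Real.exp (-(y - μ / Δ) ^ 2 / (2 * (s ^ 2 / Δ))))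
        = ((2:ℝ) * π * (s ^ 2)) ^ (-(1:ℝ)/2) * Real.exp (-(0 - μ) ^ 2 / (2 * s ^ 2)) *
        ((2 * π * (s ^ 2 / Δ)) ^ (-(1:ℝ)/2) * Real.exp (-(y - μ / Δ) ^ 2 / (2 * (s ^ 2 / Δ))))
        from rfl]
    apply exp_aux
    have hΔ' : Δ ≠ 0 := hΔpos.ne'
    have hss : (s:ℝ) ^ 2 ≠ 0 := hs2.ne'
    field_simp
    rw [hΔ]
    ring
  -- q on the two half lines
  have hq1 : ∀ y ≤ (0:ℝ), q y = normalPDF μ (s ^ 2) y := by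
    intro y hy
    rw [hq]
    simp [max_eq_right hy]
  have hq2 : ∀ y : ℝ, 0 < y → q y = C / B * normalPDF (μ / Δ) (s ^ 2 / Δ) y := by
    intro y hy
    rw [hq]
    simp only [max_eq_left hy.le]
    rw [div_mul_eq_mul_div, eq_div_iff hB.ne']
    exact hkey y
  -- integrability of q
  have hqint : Integrable q := by
    refine (normalPDF_integrable μ (s ^ 2) hs2).mono ?_ (ae_of_all _ fun x => ?_)
    · rw [hq]
      exact ((Real.continuous_exp.comp (by fun_prop)).mul
        (by unfold normalPDF; fun_prop)).aestronglyMeasurable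
    · rw [hq]
      simp only [Real.norm_eq_abs]
      have h1 : 0 < normalPDF μ (s ^ 2) x := normalPDF_pos _ _ _ hs2
      have h2 : Real.exp (-c * (max x 0) ^ 2) ≤ 1 := by
        rw [Real.exp_le_one_iff]
        have : (0:ℝ) ≤ c * (max x 0) ^ 2 := by positivity
        linarith
      rw [abs_of_nonneg (by positivity), abs_of_nonneg h1.le]
      nlinarith [Real.exp_pos (-c * (max x 0) ^ 2)]
  -- compute Z
  have hZval : Z = A + C / B * D := by
    rw [hZ, ← intervalIntegral.integral_Iic_add_Ioi hqint.integrableOn hqint.integrableOn]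
    have e1 : ∫ x in Set.Iic (0:ℝ), q x = A := by
      rw [hA_def, normalCDF]
      exact setIntegral_congr_fun measurableSet_Iic fun y hy => hq1 y hy
    have e2 : ∫ x in Set.Ioi (0:ℝ), q x = C / B * D := by
      rw [setIntegral_congr_fun measurableSet_Ioi fun y (hy : y ∈ Set.Ioi 0) => hq2 y hy,
        MeasureTheory.integral_const_mul, ← hDeq, hD_def]
    rw [e1, e2]
  have hden : 0 < A * B + C * D := by positivity
  have hZpos : 0 < Z := by
    rw [hZval]; positivity
  intro x
  rcases le_or_gt x 0 with hx | hx
  · rw [if_neg (not_lt.2 hx), if_pos hx, hq1 x hx, hp₁, hZval]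
    field_simp
    ring
  · rw [if_pos hx, if_neg (not_le.2 hx), hq2 x hx, hp₁, hZval]
    field_simp
    ring
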